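/- For π ∈ (0,1)^n, the points x = π and x = 1−π (coordinatewise complement) are zeros of the mean-field vector field f, i.e., f(π) = 0 and f(1−π) = 0, where f_i(x) = ∑_{r∈{±1}^n} g_π(r)[(1/2)(1 − tanh(⟨r,ℓ_x⟩/2) r_i) − x_i]. -/

import Mathlib

open Real Finset

/-- Sign of a Boolean: `true ↦ +1`, `false ↦ -1`. -/
def sg (b : Bool) : ℝ := if b then 1 else -1

/-- Output distribution (cosh form). -/
noncomputable def gc {n : ℕ} (x : Fin n → ℝ) (r : Fin n → ℝ) : ℝ :=
  Real.cosh ((∑ j, r j * Real.log ((1 - x j) / x j)) / 2) *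
    ∏ j, Real.sqrt (x j * (1 - x j))

/-- Update field coordinate (tanh form). -/
noncomputable def ft {n : ℕ} (r x : Fin n → ℝ) (i : Fin n) : ℝ :=
  (1/2) * (1 - Real.tanh ((∑ j, r j * Real.log ((1 - x j) / x j)) / 2) * r i) - x i

/-- KL divergence from `g_p` to `g_x` (sum over the hypercube `{±1}^n`). -/
noncomputable def V {n : ℕ} (p x : Fin n → ℝ) : ℝ :=
  ∑ r : Fin n → Bool, gc p (fun k => sg (r k)) *
    Real.log (gc p (fun k => sg (r k)) / gc x (fun k => sg (r k)))

/-- Mean-field vector field `f_i(x) = E_{R ∼ g_p}[f̃_i(R,x)]`. -/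
noncomputable def fvec {n : ℕ} (p x : Fin n → ℝ) (i : Fin n) : ℝ :=
  ∑ r : Fin n → Bool, gc p (fun k => sg (r k)) * ft (fun k => sg (r k)) x i

/- Auxiliary development -/

/-- product of `A`-type factors -/
noncomputable def Ap {n : ℕ} (p : Fin n → ℝ) (r : Fin n → Bool) : ℝ :=
  ∏ j, (if r j then 1 - p j else p j)

/-- product of `B`-type factors -/
noncomputable def Bp {n : ℕ} (p : Fin n → ℝ) (r : Fin n → Bool) : ℝ :=
  ∏ j, (if r j then p j else 1 - p j)

lemma sum_prod_bool {n : ℕ} (c : Fin n → Bool → ℝ) :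
    ∑ r : Fin n → Bool, ∏ j, c j (r j) = ∏ j, (c j true + c j false) := by
  classical
  have h : ∀ j : Fin n, c j true + c j false = ∑ b : Bool, c j b := by
    intro j; simp [Fintype.sum_bool]
  rw [Finset.prod_congr rfl (fun j _ => h j), Finset.prod_univ_sum]
  exact Finset.sum_congr Fintype.piFinset_univ.symm (fun _ _ => rfl)

lemma exp_log_sqrt (a b : ℝ) (ha : 0 < a) (hb : 0 < b) :
    Real.exp (Real.log (a / b) / 2) * Real.sqrt (b * a) = a := by
  rw [← Real.log_sqrt (by positivity), Real.exp_log (by positivity),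
    ← Real.sqrt_mul (by positivity)]
  rw [show a / b * (b * a) = a ^ 2 by field_simp]
  exact Real.sqrt_sq ha.le

lemma exp_prod {n : ℕ} (p : Fin n → ℝ) (hp : ∀ i, p i ∈ Set.Ioo (0:ℝ) 1) (r : Fin n → Bool) :
    Real.exp ((∑ j, sg (r j) * Real.log ((1 - p j) / p j)) / 2) *
      ∏ j, Real.sqrt (p j * (1 - p j)) = Ap p r := by
  unfold Ap
  rw [Finset.sum_div, Real.exp_sum, ← Finset.prod_mul_distrib]
  refine Finset.prod_congr rfl fun j _ => ?_
  have h0 := (hp j).1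
  have hq : (0:ℝ) < 1 - p j := by have := (hp j).2; linarith
  cases hrj : r j
  · have e : sg false * Real.log ((1 - p j) / p j) / 2 = Real.log (p j / (1 - p j)) / 2 := by
      rw [Real.log_div hq.ne' h0.ne', Real.log_div h0.ne' hq.ne']
      simp [sg]
    rw [e, show Real.sqrt (p j * (1 - p j)) = Real.sqrt ((1 - p j) * p j) by rw [mul_comm]]
    simpa using exp_log_sqrt (p j) (1 - p j) h0 hq
  · have e : sg true * Real.log ((1 - p j) / p j) / 2 = Real.log ((1 - p j) / p j) / 2 := by
      simp [sg]
    rw [e]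
    simpa using exp_log_sqrt (1 - p j) (p j) hq h0

lemma exp_prod_neg {n : ℕ} (p : Fin n → ℝ) (hp : ∀ i, p i ∈ Set.Ioo (0:ℝ) 1) (r : Fin n → Bool) :
    Real.exp ((-(∑ j, sg (r j) * Real.log ((1 - p j) / p j))) / 2) *
      ∏ j, Real.sqrt (p j * (1 - p j)) = Bp p r := by
  have h := exp_prod p hp (fun j => !(r j))
  have e1 : (∑ j, sg (!(r j)) * Real.log ((1 - p j) / p j))
      = -∑ j, sg (r j) * Real.log ((1 - p j) / p j) := by
    rw [← Finset.sum_neg_distrib]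
    exact Finset.sum_congr rfl fun j _ => by cases r j <;> simp [sg]
  rw [e1] at h
  unfold Ap at h
  unfold Bp
  rw [h]
  exact Finset.prod_congr rfl fun j _ => by cases hrj : r j <;> simp [hrj]

lemma gc_eq {n : ℕ} (p : Fin n → ℝ) (hp : ∀ i, p i ∈ Set.Ioo (0:ℝ) 1) (r : Fin n → Bool) :
    gc p (fun k => sg (r k)) = (Ap p r + Bp p r) / 2 := by
  unfold gc
  rw [← exp_prod p hp r, ← exp_prod_neg p hp r, Real.cosh_eq, neg_div]
  ring

lemma sinh_prod {n : ℕ} (p : Fin n → ℝ) (hp : ∀ i, p i ∈ Set.Ioo (0:ℝ) 1) (r : Fin n → Bool) :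
    Real.sinh ((∑ j, sg (r j) * Real.log ((1 - p j) / p j)) / 2) *
      ∏ j, Real.sqrt (p j * (1 - p j)) = (Ap p r - Bp p r) / 2 := by
  rw [← exp_prod p hp r, ← exp_prod_neg p hp r, Real.sinh_eq, neg_div]
  ring

lemma gc_tanh {n : ℕ} (p : Fin n → ℝ) (hp : ∀ i, p i ∈ Set.Ioo (0:ℝ) 1) (r : Fin n → Bool) :
    gc p (fun k => sg (r k)) *
      Real.tanh ((∑ j, sg (r j) * Real.log ((1 - p j) / p j)) / 2)
      = (Ap p r - Bp p r) / 2 := by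
  have hc : Real.cosh ((∑ j, sg (r j) * Real.log ((1 - p j) / p j)) / 2) ≠ 0 :=
    (Real.cosh_pos _).ne'
  rw [← sinh_prod p hp r]
  unfold gc
  rw [Real.tanh_eq_sinh_div_cosh]
  field_simp

lemma sum_Ap {n : ℕ} (p : Fin n → ℝ) : (∑ r : Fin n → Bool, Ap p r) = 1 := by
  unfold Ap
  rw [sum_prod_bool (fun j b => if b then 1 - p j else p j)]
  rw [Finset.prod_congr rfl (fun j _ => show ((if true then 1 - p j else p j) +
    if false then 1 - p j else p j) = 1 by simp)]
  exact Finset.prod_const_one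

lemma sum_Bp {n : ℕ} (p : Fin n → ℝ) : (∑ r : Fin n → Bool, Bp p r) = 1 := by
  unfold Bp
  rw [sum_prod_bool (fun j b => if b then p j else 1 - p j)]
  rw [Finset.prod_congr rfl (fun j _ => show ((if true then p j else 1 - p j) +
    if false then p j else 1 - p j) = 1 by simp)]
  exact Finset.prod_const_one

lemma sum_sg_prod {n : ℕ} (c : Fin n → Bool → ℝ) (i : Fin n)
    (h1 : ∀ j, j ≠ i → c j true + c j false = 1) :
    ∑ r : Fin n → Bool, sg (r i) * ∏ j, c j (r j) = c i true - c i false := by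
  classical
  have key : ∀ r : Fin n → Bool, sg (r i) * ∏ j, c j (r j)
      = ∏ j, ((if j = i then sg (r j) else 1) * c j (r j)) := by
    intro r
    rw [Finset.prod_mul_distrib]
    congr 1
    simp [Finset.prod_ite_eq']
  rw [Finset.sum_congr rfl (fun r _ => key r),
    sum_prod_bool (fun j b => (if j = i then sg b else 1) * c j b)]
  have h2 : ∀ j : Fin n, ((if j = i then sg true else 1) * c j true
      + (if j = i then sg false else 1) * c j false)
      = if j = i then c i true - c i false else 1 := by
    intro j
    by_cases h : j = i
    · subst h; simp [sg]; ring
    · simp [h, h1 j h]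
  rw [Finset.prod_congr rfl (fun j _ => h2 j)]
  simp [Finset.prod_ite_eq']

lemma sum_sg_Ap {n : ℕ} (p : Fin n → ℝ) (i : Fin n) :
    ∑ r : Fin n → Bool, sg (r i) * Ap p r = 1 - 2 * p i := by
  unfold Ap
  rw [sum_sg_prod (fun j b => if b then 1 - p j else p j) i (fun j _ => by simp)]
  simp; ring

lemma sum_sg_Bp {n : ℕ} (p : Fin n → ℝ) (i : Fin n) :
    ∑ r : Fin n → Bool, sg (r i) * Bp p r = 2 * p i - 1 := by
  unfold Bp
  rw [sum_sg_prod (fun j b => if b then p j else 1 - p j) i (fun j _ => by simp)]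
  simp; ring

theorem stmt13 (n : ℕ) (p : Fin n → ℝ) (hp : ∀ i, p i ∈ Set.Ioo (0:ℝ) 1) :
    (∀ i, fvec p p i = 0) ∧ (∀ i, fvec p (fun k => 1 - p k) i = 0) := by
  constructor
  · intro i
    unfold fvec
    have e : ∀ r : Fin n → Bool, gc p (fun k => sg (r k)) * ft (fun k => sg (r k)) p i
        = (1/4 - p i / 2) * Ap p r + (1/4 - p i / 2) * Bp p r
          + (-(1/4)) * (sg (r i) * Ap p r) + (1/4) * (sg (r i) * Bp p r) := by
      intro r
      have h1 := gc_eq p hp r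
      have h2 := gc_tanh p hp r
      unfold ft
      linear_combination (1/2 - p i) * h1 - (sg (r i)/2) * h2
    rw [Finset.sum_congr rfl (fun r _ => e r)]
    rw [Finset.sum_add_distrib, Finset.sum_add_distrib, Finset.sum_add_distrib]
    rw [← Finset.mul_sum, ← Finset.mul_sum, ← Finset.mul_sum, ← Finset.mul_sum]
    rw [sum_Ap, sum_Bp, sum_sg_Ap, sum_sg_Bp]
    ring
  · intro i
    unfold fvec
    have hl : ∀ j : Fin n, Real.log ((1 - (1 - p j)) / (1 - p j))
        = -Real.log ((1 - p j) / p j) := by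
      intro j
      have h0 := (hp j).1
      have hq : (0:ℝ) < 1 - p j := by have := (hp j).2; linarith
      rw [show (1:ℝ) - (1 - p j) = p j by ring, Real.log_div h0.ne' hq.ne',
        Real.log_div hq.ne' h0.ne']
      ring
    have e : ∀ r : Fin n → Bool,
        gc p (fun k => sg (r k)) * ft (fun k => sg (r k)) (fun k => 1 - p k) i
        = (1/4 - (1 - p i) / 2) * Ap p r + (1/4 - (1 - p i) / 2) * Bp p r
          + (1/4) * (sg (r i) * Ap p r) + (-(1/4)) * (sg (r i) * Bp p r) := by
      intro r
      have h1 := gc_eq p hp r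
      have h2 := gc_tanh p hp r
      unfold ft
      simp only [hl, mul_neg, Finset.sum_neg_distrib, neg_div, Real.tanh_neg]
      linear_combination (1/2 - (1 - p i)) * h1 + (sg (r i)/2) * h2
    rw [Finset.sum_congr rfl (fun r _ => e r)]
    rw [Finset.sum_add_distrib, Finset.sum_add_distrib, Finset.sum_add_distrib]
    rw [← Finset.mul_sum, ← Finset.mul_sum, ← Finset.mul_sum, ← Finset.mul_sum]
    rw [sum_Ap, sum_Bp, sum_sg_Ap, sum_sg_Bp]
    ring
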